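/- arXiv:2404.03864 — 2 statements merged into one kernel-verified Lean document; each statement's English description precedes it below -/
import Mathlib

section
/- For 0 < λ ≤ 1, the range of the map (φ₁, φ₃) ↦ e^{iφ₁} + e^{iφ₃} + λ e^{i(φ₁+φ₃)} on ℝ² is a simply connected subset of ℂ. -/
open Complex

/-- Auxiliary algebraic identity: for `u` on the unit circle,
`|z - u| = |1 + lam*u|` iff `normSq z - lam² = 2 Re((z+lam) * conj u)`. -/
lemma szego_normSq_cond (lam : ℝ) (z u : ℂ) (hu : ‖u‖ = 1) :
    ‖z - u‖ = ‖1 + (lam:ℂ)*u‖ ↔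
      Complex.normSq z - lam^2 = 2 * ((z + (lam:ℂ)) * (starRingEnd ℂ) u).re := by
  have hnu : Complex.normSq u = 1 := by
    rw [← Complex.sq_norm, hu]; norm_num
  have habs : ‖z - u‖ = ‖1 + (lam:ℂ)*u‖ ↔
      Complex.normSq (z - u) = Complex.normSq (1 + (lam:ℂ)*u) := by
    constructor
    · intro h; rw [← Complex.sq_norm, ← Complex.sq_norm, h]
    · intro h
      have := congrArg Real.sqrt h
      rwa [← Complex.sq_norm, ← Complex.sq_norm, Real.sqrt_sq (norm_nonneg _),
        Real.sqrt_sq (norm_nonneg _)] at this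
  rw [habs, Complex.normSq_sub, Complex.normSq_add]
  have h1 : Complex.normSq (1:ℂ) = 1 := by simp
  have h2 : Complex.normSq ((lam:ℂ)*u) = lam^2 := by
    rw [Complex.normSq_mul, hnu, Complex.normSq_ofReal]; ring
  have hre : ((z + (lam:ℂ)) * (starRingEnd ℂ) u).re
      = (z * (starRingEnd ℂ) u).re + lam * u.re := by
    simp [add_mul, Complex.add_re, Complex.mul_re, Complex.conj_re, Complex.conj_im,
      Complex.ofReal_re, Complex.ofReal_im]
  have hre2 : ((1:ℂ) * (starRingEnd ℂ) ((lam:ℂ)*u)).re = lam * u.re := by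
    simp [Complex.mul_re, Complex.conj_re, Complex.conj_im]
  rw [h1, h2, hnu, hre, hre2]
  constructor <;> (intro h; linarith)

/-- `-lam` is in the range (take φ₁ = 0, φ₃ = π). -/
lemma szego_neg_lam_mem (lam : ℝ) :
    (-(lam:ℂ)) ∈ Set.range (fun p : ℝ × ℝ => Complex.exp (I * p.1) + Complex.exp (I * p.2)
          + (lam : ℂ) * Complex.exp (I * (p.1 + p.2))) := by
  refine ⟨(0, Real.pi), ?_⟩
  have h1 : Complex.exp (I * ((0:ℝ):ℂ)) = 1 := by norm_num
  have h2 : Complex.exp (I * ((Real.pi:ℝ):ℂ)) = -1 := by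
    rw [mul_comm]; exact Complex.exp_pi_mul_I
  beta_reduce
  push_cast
  rw [show I * ((0:ℂ) + (Real.pi:ℂ)) = I * ((Real.pi:ℝ):ℂ) by push_cast; ring]
  rw [show I * (0:ℂ) = I * ((0:ℝ):ℂ) by norm_num]
  rw [h1, h2]
  ring

/-- Characterization of the range: `z` is in the range iff `||z|² - lam²| ≤ 2|z + lam|`. -/
lemma szego_mem_iff (lam : ℝ) (hlam : 0 < lam) (z : ℂ) :
    z ∈ Set.range (fun p : ℝ × ℝ => Complex.exp (I * p.1) + Complex.exp (I * p.2)
          + (lam : ℂ) * Complex.exp (I * (p.1 + p.2))) ↔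
      |‖z‖ ^ 2 - lam ^ 2| ≤ 2 * ‖z + lam‖ := by
  constructor
  · rintro ⟨p, rfl⟩
    beta_reduce
    set u := Complex.exp (I * (p.1:ℂ)) with hud
    set v := Complex.exp (I * (p.2:ℂ)) with hvd
    have hu : ‖u‖ = 1 := by simp [hud, Complex.norm_exp]
    have hv : ‖v‖ = 1 := by simp [hvd, Complex.norm_exp]
    have huv : Complex.exp (I * ((p.1:ℂ) + (p.2:ℂ))) = u * v := by
      rw [hud, hvd, ← Complex.exp_add]; ring_nf
    set z := u + v + (lam:ℂ) * Complex.exp (I * ((p.1:ℂ) + (p.2:ℂ))) with hz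
    have hzu : z - u = v * (1 + (lam:ℂ)*u) := by rw [hz, huv]; ring
    have habs : ‖z - u‖ = ‖1 + (lam:ℂ)*u‖ := by
      rw [hzu, norm_mul, hv, one_mul]
    have hcond := (szego_normSq_cond lam z u hu).1 habs
    rw [← Complex.sq_norm] at hcond
    calc |‖z‖ ^ 2 - lam ^ 2| = 2 * |((z + (lam:ℂ)) * (starRingEnd ℂ) u).re| := by
            rw [hcond, abs_mul]; simp
      _ ≤ 2 * ‖(z + (lam:ℂ)) * (starRingEnd ℂ) u‖ := by
            have := Complex.abs_re_le_norm ((z + (lam:ℂ)) * (starRingEnd ℂ) u)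
            linarith
      _ = 2 * ‖z + lam‖ := by rw [norm_mul, Complex.norm_conj, hu, mul_one]
  · intro h
    by_cases hzl : z + (lam:ℂ) = 0
    · have hz : z = -(lam:ℂ) := by linear_combination hzl
      rw [hz]; exact szego_neg_lam_mem lam
    · set M := ‖z + (lam:ℂ)‖ with hM
      have hM0 : 0 < M := by
        rw [hM]; exact norm_pos_iff.2 hzl
      set α := Real.arccos ((‖z‖ ^ 2 - lam ^ 2)/(2*M)) with hα
      have hcos : Real.cos α = (‖z‖ ^ 2 - lam ^ 2)/(2*M) := by
        apply Real.cos_arccos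
        · rw [le_div_iff₀ (by linarith)]
          have := abs_le.1 h
          nlinarith [this.1]
        · rw [div_le_iff₀ (by linarith)]
          have := abs_le.1 h
          nlinarith [this.2]
      set θ := Complex.arg (z + (lam:ℂ)) with hθ
      set u := Complex.exp (I * ((θ - α : ℝ):ℂ)) with hud
      have hu : ‖u‖ = 1 := by simp [hud, Complex.norm_exp]
      have hconj : (starRingEnd ℂ) u = Complex.exp (-(I * ((θ - α : ℝ):ℂ))) := by
        rw [hud, ← Complex.exp_conj]; congr 1; simp
      have harg : (M:ℂ) * Complex.exp ((θ : ℝ) * I) = z + (lam:ℂ) :=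
        Complex.norm_mul_exp_arg_mul_I _
      have hmul : (z + (lam:ℂ)) * (starRingEnd ℂ) u = (M:ℂ) * Complex.exp ((α:ℝ) * I) := by
        rw [hconj, ← harg, mul_assoc, ← Complex.exp_add]
        congr 1
        push_cast
        ring
      have hre : ((z + (lam:ℂ)) * (starRingEnd ℂ) u).re = M * Real.cos α := by
        rw [hmul, Complex.mul_re]
        simp [Complex.exp_ofReal_mul_I_re]
      have hcond : Complex.normSq z - lam^2 = 2 * ((z + (lam:ℂ)) * (starRingEnd ℂ) u).re := by
        rw [hre, hcos, ← Complex.sq_norm]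
        field_simp
      have habs : ‖z - u‖ = ‖1 + (lam:ℂ)*u‖ :=
        (szego_normSq_cond lam z u hu).2 hcond
      by_cases hden : (1 + (lam:ℂ)*u) = 0
      · have hzu : z = u := by
          have : ‖z - u‖ = 0 := by rw [habs, hden, norm_zero]
          have := norm_eq_zero.1 this
          linear_combination this
        have hlu : (lam:ℂ) * u = -1 := by linear_combination hden
        have hlam1 : lam = 1 := by
          have := congrArg (‖·‖) hlu
          rw [norm_mul, hu, mul_one, Complex.norm_real, Real.norm_eq_abs] at this
          simp only [norm_neg, norm_one] at this
          rwa [abs_of_pos hlam] at this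
        have hu1 : u = -1 := by
          rw [hlam1] at hlu; simpa using hlu
        have : z = -(lam:ℂ) := by rw [hzu, hu1, hlam1]; norm_num
        rw [this]; exact szego_neg_lam_mem lam
      · set v := (z - u) / (1 + (lam:ℂ)*u) with hvd
        have hv : ‖v‖ = 1 := by
          rw [hvd, norm_div, habs, div_self]
          exact norm_ne_zero_iff.2 hden
        have hv2 : v * (1 + (lam:ℂ)*u) = z - u := div_mul_cancel₀ _ hden
        refine ⟨(Complex.arg u, Complex.arg v), ?_⟩
        have hu' : Complex.exp (I * ((Complex.arg u : ℝ):ℂ)) = u := by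
          have := Complex.norm_mul_exp_arg_mul_I u
          rw [hu, Complex.ofReal_one, one_mul] at this
          rw [mul_comm]; exact this
        have hv' : Complex.exp (I * ((Complex.arg v : ℝ):ℂ)) = v := by
          have := Complex.norm_mul_exp_arg_mul_I v
          rw [hv, Complex.ofReal_one, one_mul] at this
          rw [mul_comm]; exact this
        beta_reduce
        rw [show I * ((Complex.arg u :ℂ) + (Complex.arg v :ℂ))
            = I * ((Complex.arg u : ℝ):ℂ) + I * ((Complex.arg v : ℝ):ℂ) by ring]
        rw [Complex.exp_add, hu', hv']
        linear_combination hv2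

/-- The real inequality showing the characterizing condition is preserved under
scaling towards the origin. -/
lemma szego_star_ineq (lam b r N N' : ℝ) (hlam : 0 < lam) (hlam1 : lam ≤ 1)
    (hb0 : 0 ≤ b) (hb1 : b ≤ 1) (hr : 0 ≤ r)
    (h1 : |lam - b*r| ≤ N') (h2 : b*N - (1-b)*lam ≤ N')
    (h : |r^2 - lam^2| ≤ 2*N) :
    |b^2*r^2 - lam^2| ≤ 2*N' := by
  rcases le_or_gt (b*r + lam) 2 with hc | hc
  · have e1 : |b^2*r^2 - lam^2| = |b*r - lam| * (b*r + lam) := by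
      rw [show b^2*r^2 - lam^2 = (b*r - lam) * (b*r + lam) by ring, abs_mul,
        _root_.abs_of_nonneg (by positivity : (0:ℝ) ≤ b*r+lam)]
    rw [e1, abs_sub_comm]
    calc |lam - b*r| * (b*r + lam) ≤ |lam - b*r| * 2 := by
          apply mul_le_mul_of_nonneg_left hc (abs_nonneg _)
      _ ≤ 2 * N' := by linarith
  · have hbr : 2 - lam < b*r := by linarith
    have hrbig : 2 - lam ≤ r := by nlinarith
    have hlam2 : lam ≤ 2 - lam := by linarith
    have hr2 : lam^2 ≤ r^2 := by nlinarith
    have hN : r^2 - lam^2 ≤ 2*N := by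
      have := abs_le.1 h; linarith [this.2]
    have hkey : b^2*r^2 - lam^2 ≤ 2*N' := by
      nlinarith [mul_nonneg (sub_nonneg.2 hb1) (sub_nonneg.2 (show lam*(2-lam) ≤ b*r^2 by nlinarith))]
    have hpos : 0 ≤ b^2*r^2 - lam^2 := by nlinarith
    rw [_root_.abs_of_nonneg hpos]; exact hkey

/-- The range is star-shaped about the origin. -/
lemma szego_starConvex (lam : ℝ) (hlam : 0 < lam) (hlam1 : lam ≤ 1) :
    StarConvex ℝ (0:ℂ)
      (Set.range (fun p : ℝ × ℝ => Complex.exp (I * p.1) + Complex.exp (I * p.2)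
          + (lam : ℂ) * Complex.exp (I * (p.1 + p.2)))) := by
  intro z hz a b ha hb hab
  rw [smul_zero, zero_add]
  have hbz : b • z = (b:ℂ) * z := Complex.real_smul
  rw [hbz]
  rw [szego_mem_iff lam hlam] at hz ⊢
  have hb1 : b ≤ 1 := by linarith
  have habsz : ‖(b:ℂ) * z‖ = b * ‖z‖ := by
    rw [norm_mul, Complex.norm_real, Real.norm_eq_abs, _root_.abs_of_nonneg hb]
  rw [habsz, mul_pow]
  apply szego_star_ineq lam b (‖z‖) (‖z + lam‖)
    (‖(b:ℂ)*z + lam‖) hlam hlam1 hb hb1 (norm_nonneg z)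
  · -- |lam - b*|z|| ≤ |b z + lam|
    have h5 := abs_norm_sub_norm_le ((lam:ℂ)) (-((b:ℂ)*z))
    simp only [norm_neg, norm_mul, Complex.norm_real, Real.norm_eq_abs] at h5
    rw [_root_.abs_of_nonneg hb, _root_.abs_of_nonneg hlam.le] at h5
    have e : ((lam:ℂ) - -((b:ℂ)*z)) = (b:ℂ)*z + (lam:ℂ) := by ring
    rwa [e] at h5
  · -- b*|z+lam| - (1-b)*lam ≤ |b z + lam|
    have e : ((b:ℂ)*z + (lam:ℂ)) = (b:ℂ)*(z + lam) - (-(((1-b:ℝ)):ℂ)*(lam:ℂ)) := by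
      push_cast; ring
    have h3 := abs_norm_sub_norm_le ((b:ℂ)*(z + lam)) ((-((1-b:ℝ)):ℂ)*(lam:ℂ))
    simp only [norm_mul, norm_neg, Complex.norm_real, Real.norm_eq_abs] at h3
    rw [_root_.abs_of_nonneg hb, _root_.abs_of_nonneg hlam.le,
      _root_.abs_of_nonneg (by linarith : (0:ℝ) ≤ 1 - b)] at h3
    calc b * ‖z + lam‖ - (1-b)*lam
        ≤ |b * ‖z + lam‖ - (1-b)*lam| := le_abs_self _
      _ ≤ ‖(b:ℂ)*(z+lam) - (-((1-b:ℝ)):ℂ)*(lam:ℂ)‖ := h3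
      _ = ‖(b:ℂ)*z + lam‖ := by rw [← e]
  · exact hz

/-- For 0 < λ ≤ 1, the range of (φ₁, φ₃) ↦ e^{iφ₁} + e^{iφ₃} + λ e^{i(φ₁+φ₃)}
is a simply connected subset of ℂ. -/
theorem szego_range_simply_connected (lam : ℝ) (hlam : 0 < lam) (hlam1 : lam ≤ 1) :
    SimplyConnectedSpace
      ↥(Set.range (fun p : ℝ × ℝ => Complex.exp (I * p.1) + Complex.exp (I * p.2)
          + (lam : ℂ) * Complex.exp (I * (p.1 + p.2)))) := by
  have h0 : (0:ℂ) ∈ Set.range (fun p : ℝ × ℝ => Complex.exp (I * p.1) + Complex.exp (I * p.2)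
      + (lam : ℂ) * Complex.exp (I * (p.1 + p.2))) := by
    rw [szego_mem_iff lam hlam]
    have : ‖(0:ℂ) + lam‖ = lam := by
      rw [zero_add, Complex.norm_real, Real.norm_eq_abs, _root_.abs_of_nonneg hlam.le]
    rw [this]
    rw [norm_zero]
    rw [_root_.abs_of_nonpos (by nlinarith : (0:ℝ)^2 - lam^2 ≤ 0)]
    nlinarith
  have hcontr : ContractibleSpace
      ↥(Set.range (fun p : ℝ × ℝ => Complex.exp (I * p.1) + Complex.exp (I * p.2)
          + (lam : ℂ) * Complex.exp (I * (p.1 + p.2)))) :=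
    (szego_starConvex lam hlam hlam1).contractibleSpace ⟨0, h0⟩
  exact SimplyConnectedSpace.ofContractible _
end

section
/- Fix a₁, a₂, a₃ > 0. Given a real matrix [[p, q],[r, s]] with determinant 1 and s ≠ 0, the values t₁ = −(r + a₁a₃/a₂)/s, t₂ = −a₁a₂ s / a₃, t₃ = (a₃² q − a₂a₃/a₁)/s are the unique real numbers such that A₃A₂A₁ = [[p, q],[r, s]], where A_j = (1/a_j)·[[t_j, -1],[a_j², 0]]. -/
open Matrix

/-- Given a₁,a₂,a₃ > 0 and an SL(2,ℝ) matrix [[p,q],[r,s]] with s ≠ 0, the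
stated values t₁, t₂, t₃ are the unique real numbers with A₃A₂A₁ = [[p,q],[r,s]],
where A_j = (1/a_j)·[[t_j, -1],[a_j², 0]]. -/
theorem jacobi_triple_product_unique_solution (a₁ a₂ a₃ p q r s : ℝ)
    (ha₁ : 0 < a₁) (ha₂ : 0 < a₂) (ha₃ : 0 < a₃)
    (hdet : p * s - q * r = 1) (hs : s ≠ 0)
    (A : ℝ → ℝ → Matrix (Fin 2) (Fin 2) ℝ)
    (hA : ∀ a t, A a t = (1 / a) • !![t, -1; a ^ 2, 0]) :
    (A a₃ ((a₃ ^ 2 * q - a₂ * a₃ / a₁) / s) * A a₂ (-(a₁ * a₂ * s / a₃)) *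
        A a₁ (-((r + a₁ * a₃ / a₂) / s)) = !![p, q; r, s]) ∧
    ∀ t₁ t₂ t₃ : ℝ, A a₃ t₃ * A a₂ t₂ * A a₁ t₁ = !![p, q; r, s] →
      t₁ = -((r + a₁ * a₃ / a₂) / s) ∧ t₂ = -(a₁ * a₂ * s / a₃) ∧
        t₃ = (a₃ ^ 2 * q - a₂ * a₃ / a₁) / s := by
  have h1 := ha₁.ne'
  have h2 := ha₂.ne'
  have h3 := ha₃.ne'
  constructor
  · ext i j
    fin_cases i <;> fin_cases j <;>
      simp [hA, Matrix.mul_apply, Fin.sum_univ_succ] <;>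
      field_simp
    · linear_combination (-(a₁*a₂*a₃)) * hdet
    all_goals ring
  · intro t₁ t₂ t₃ h
    have e01 := congrFun (congrFun h 0) 1
    have e10 := congrFun (congrFun h 1) 0
    have e11 := congrFun (congrFun h 1) 1
    simp [hA, Matrix.mul_apply, Fin.sum_univ_succ] at e01 e10 e11
    field_simp at e01 e10 e11
    refine ⟨?_, ?_, ?_⟩
    · have key : (a₁*a₂*a₃*s) * t₁ = (a₁*a₂*a₃*s) * (-((r + a₁ * a₃ / a₂) / s)) := by
        field_simp
        apply mul_left_cancel₀ h1
        linear_combination (-1)*e10 + (-t₁)*e11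
      exact mul_left_cancel₀ (by positivity) key
    · have key : a₃ * t₂ = a₃ * (-(a₁ * a₂ * s / a₃)) := by
        field_simp
        linear_combination -e11
      exact mul_left_cancel₀ h3 key
    · have key : (a₁*a₂*a₃*s) * t₃ = (a₁*a₂*a₃*s) * ((a₃ ^ 2 * q - a₂ * a₃ / a₁) / s) := by
        field_simp
        apply mul_left_cancel₀ h2
        linear_combination a₃*e01 + (-t₃)*e11
      exact mul_left_cancel₀ (by positivity) key
end
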